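/- Let U_1, …, U_m be nonempty closed convex subsets of R^n with nonempty intersection U, let x_k ∈ R^n, let S_{ik} = {z : ⟨x_k − P_{U_i}(x_k), z − P_{U_i}(x_k)⟩ ≤ 0}, Ω_k = ∩_{i=1}^m S_{ik}, and x_{k+1} = P_{Ω_k}(x_k). Then for every u ∈ U, ‖x_k − u‖² ≥ ‖x_k − x_{k+1}‖² + ‖x_{k+1} − u‖²; in particular ‖x_{k+1} − u‖ ≤ ‖x_k − u‖. -/

import Mathlib

open Metric Filter Topology

/-- `p` is the metric projection of `z` onto `X`. -/
def IsProj {n : ℕ} (X : Set (EuclideanSpace ℝ (Fin n))) (z p : EuclideanSpace ℝ (Fin n)) : Prop :=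
  p ∈ X ∧ ∀ y ∈ X, dist z p ≤ dist z y

lemma isProj_inner_le {n : ℕ} {X : Set (EuclideanSpace ℝ (Fin n))} (hX : Convex ℝ X)
    {z q : EuclideanSpace ℝ (Fin n)} (h : IsProj X z q) :
    ∀ y ∈ X, inner ℝ (z - q) (y - q) ≤ (0 : ℝ) := by
  have hq : q ∈ X := h.1
  rw [← norm_eq_iInf_iff_real_inner_le_zero hX hq]
  refine le_antisymm ?_ ?_
  · haveI : Nonempty X := ⟨⟨q, hq⟩⟩
    refine le_ciInf fun w => ?_
    have := h.2 w w.2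
    simpa [dist_eq_norm] using this
  · exact ciInf_le ⟨0, fun _ ⟨_, h'⟩ => h' ▸ norm_nonneg _⟩ (⟨q, hq⟩ : X)

/-- Fejér monotonicity of the 3PM step. -/
theorem stmt1 {n m : ℕ} (U : Fin m → Set (EuclideanSpace ℝ (Fin n)))
    (hne : ∀ i, (U i).Nonempty) (hcl : ∀ i, IsClosed (U i)) (hcv : ∀ i, Convex ℝ (U i))
    (hU : (⋂ i, U i).Nonempty)
    (xk : EuclideanSpace ℝ (Fin n)) (p : Fin m → EuclideanSpace ℝ (Fin n))
    (hp : ∀ i, IsProj (U i) xk (p i))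
    (Ω : Set (EuclideanSpace ℝ (Fin n)))
    (hΩ : Ω = ⋂ i, {z : EuclideanSpace ℝ (Fin n) | inner ℝ (xk - p i) (z - p i) ≤ (0 : ℝ)})
    (xk1 : EuclideanSpace ℝ (Fin n)) (hx1 : IsProj Ω xk xk1) :
    ∀ u ∈ ⋂ i, U i,
      ‖xk - u‖ ^ 2 ≥ ‖xk - xk1‖ ^ 2 + ‖xk1 - u‖ ^ 2 ∧ ‖xk1 - u‖ ≤ ‖xk - u‖ := by
  intro u hu
  -- Ω is convex
  have hΩconv : Convex ℝ Ω := by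
    rw [hΩ]
    refine convex_iInter fun i => ?_
    have : {z : EuclideanSpace ℝ (Fin n) | inner ℝ (xk - p i) (z - p i) ≤ (0 : ℝ)} =
        {z | inner ℝ (xk - p i) z ≤ (inner ℝ (xk - p i) (p i) : ℝ)} := by
      ext z; simp [inner_sub_right, sub_nonpos]
    rw [this]
    exact convex_halfSpace_le
      ⟨fun a b => inner_add_right _ _ _, fun c a => real_inner_smul_right _ _ _⟩ _
  -- u ∈ Ω
  have huΩ : u ∈ Ω := by
    rw [hΩ]
    refine Set.mem_iInter.2 fun i => ?_
    exact isProj_inner_le (hcv i) (hp i) u (Set.mem_iInter.1 hu i)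
  -- obtuse angle at xk1
  have key : inner ℝ (xk - xk1) (u - xk1) ≤ (0 : ℝ) :=
    isProj_inner_le hΩconv hx1 u huΩ
  have hdecomp : ‖xk - u‖ ^ 2 =
      ‖xk - xk1‖ ^ 2 + 2 * inner ℝ (xk - xk1) (xk1 - u) + ‖xk1 - u‖ ^ 2 := by
    have : xk - u = (xk - xk1) + (xk1 - u) := by abel
    rw [this, norm_add_sq_real]
  have hinner : (0 : ℝ) ≤ inner ℝ (xk - xk1) (xk1 - u) := by
    have : xk1 - u = -(u - xk1) := by abel
    rw [this, inner_neg_right]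
    linarith
  have h1 : ‖xk - u‖ ^ 2 ≥ ‖xk - xk1‖ ^ 2 + ‖xk1 - u‖ ^ 2 := by
    rw [hdecomp]; linarith
  refine ⟨h1, ?_⟩
  have h2 : ‖xk1 - u‖ ^ 2 ≤ ‖xk - u‖ ^ 2 := by nlinarith [sq_nonneg ‖xk - xk1‖]
  nlinarith [norm_nonneg (xk1 - u), norm_nonneg (xk - u)]
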